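/- If for all $N \geq 1$, every 3-coloring of the transitive tournament on $N$ vertices contains a 1-color-avoiding directed path of vertex-length at least $N^{2/3}$, then for every 3-colored transitive tournament on $N$ vertices, the product of the lengths of the longest 1-color-avoiding paths in each of the three 2-color classes is at least $N^2$. -/

import Mathlib

def PathIn (col : ℕ → ℕ → Fin 3) (c : Fin 3) (V k : ℕ) (i : Fin k → ℕ) : Prop :=
  StrictMono i ∧ (∀ t, i t < V) ∧
  ∀ (t : ℕ) (h : t + 1 < k), col (i ⟨t, Nat.lt_of_succ_lt h⟩) (i ⟨t+1, h⟩) ≠ c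

def Bound (col : ℕ → ℕ → Fin 3) (c : Fin 3) (V L : ℕ) : Prop :=
  ∀ k i, PathIn col c V k i → k ≤ L

def pcol (N : ℕ) (col1 col2 : ℕ → ℕ → Fin 3) (x y : ℕ) : Fin 3 :=
  if x / N = y / N then col2 (x % N) (y % N) else col1 (x / N) (y / N)

lemma mod_lt_mod' {x y n : ℕ} (hxy : x < y) (h : x / n = y / n) : x % n < y % n := by
  have h1 : n * (y / n) + x % n = x := by rw [← h]; exact Nat.div_add_mod x n
  have h2 := Nat.div_add_mod y n
  omega

lemma pcol_bound {M N : ℕ} {col1 col2 : ℕ → ℕ → Fin 3} {c : Fin 3} {L1 L2 : ℕ}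
    (h1 : Bound col1 c M L1) (h2 : Bound col2 c N L2) :
    Bound (pcol N col1 col2) c (M * N) (L1 * L2) := by
  intro k i hp
  obtain ⟨hmono, hlt, hedge⟩ := hp
  rcases Nat.eq_zero_or_pos k with hk | hk
  · simp [hk]
  have hMN : 0 < M * N := lt_of_le_of_lt (Nat.zero_le _) (hlt ⟨0, hk⟩)
  have hN : 0 < N := Nat.pos_of_ne_zero (fun h => by simp [h] at hMN)
  set b : Fin k → ℕ := fun t => i t / N with hbdef
  have hb : Monotone b := fun s t hst => Nat.div_le_div_right (hmono.monotone hst)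
  set S : Finset ℕ := Finset.image b Finset.univ with hSdef
  -- Step 1: each fiber has size ≤ L2
  have fiber_bound : ∀ m ∈ S, (Finset.univ.filter fun t => b t = m).card ≤ L2 := by
    intro m hm
    set F := Finset.univ.filter fun t => b t = m with hFdef
    have hFne : F.Nonempty := by
      obtain ⟨t, -, ht⟩ := Finset.mem_image.mp hm
      exact ⟨t, by simp [hFdef, ht]⟩
    set tmin := F.min' hFne with htmin
    set tmax := F.max' hFne with htmax
    have hmemF : ∀ t : Fin k, t ∈ F ↔ b t = m := by
      intro t; simp [hFdef]
    have hminm : b tmin = m := (hmemF _).mp (F.min'_mem hFne)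
    have hmaxm : b tmax = m := (hmemF _).mp (F.max'_mem hFne)
    have hint : ∀ t : Fin k, tmin ≤ t → t ≤ tmax → b t = m := by
      intro t h1' h2'
      have := hb h1'; have := hb h2'
      omega
    set r := tmax.val + 1 - tmin.val with hr
    have hcard : F.card ≤ r := by
      have hc2 : F.card ≤ (Finset.range r).card := by
        apply Finset.card_le_card_of_injOn (fun (t : Fin k) => t.val - tmin.val)
        · intro t ht
          have h1' : tmin ≤ t := F.min'_le t ht
          have h2' : t ≤ tmax := F.le_max' t ht
          simp only [Fin.le_def] at h1' h2'
          simp only [Finset.mem_coe, Finset.mem_range]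
          omega
        · intro t ht t' ht' hh
          have h1' : tmin ≤ t := F.min'_le t ht
          have h1'' : tmin ≤ t' := F.min'_le t' ht'
          have : t.val = t'.val := by
            simp only [Fin.le_def] at h1' h1''
            simp only [Finset.mem_range] at hh ⊢
            omega
          exact Fin.ext this
      simpa using hc2
    refine le_trans hcard (h2 r (fun j => i ⟨tmin.val + j.val, by
        have := j.isLt; have := tmax.isLt; omega⟩ % N) ⟨?_, ?_, ?_⟩)
    · intro j j' hjj
      have hjv : j.val < j'.val := hjj
      have hlt' : (⟨tmin.val + j.val, by have := j.isLt; have := tmax.isLt; omega⟩ : Fin k)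
          < ⟨tmin.val + j'.val, by have := j'.isLt; have := tmax.isLt; omega⟩ :=
        Fin.mk_lt_mk.mpr (by omega)
      refine mod_lt_mod' (hmono hlt') ?_
      have e1 := hint ⟨tmin.val + j.val, by have := j.isLt; have := tmax.isLt; omega⟩
        (by simp only [Fin.le_def]; omega) (by simp only [Fin.le_def]; omega)
      have e2 := hint ⟨tmin.val + j'.val, by have := j'.isLt; have := tmax.isLt; omega⟩
        (by simp only [Fin.le_def]; omega) (by simp only [Fin.le_def]; omega)
      simp only [hbdef] at e1 e2
      rw [e1, e2]
    · intro t; exact Nat.mod_lt _ hN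
    · intro t ht
      have hk1 : tmin.val + t < k := by have := tmax.isLt; omega
      have hk2 : tmin.val + t + 1 < k := by have := tmax.isLt; omega
      have e1 := hint ⟨tmin.val + t, hk1⟩ (by simp only [Fin.le_def]; omega) (by simp only [Fin.le_def]; omega)
      have e2 := hint ⟨tmin.val + t + 1, hk2⟩ (by simp only [Fin.le_def]; omega) (by simp only [Fin.le_def]; omega)
      simp only [hbdef] at e1 e2
      have he := hedge (tmin.val + t) hk2
      rw [show (⟨tmin.val + t + 1, hk2⟩ : Fin k) = ⟨tmin.val + t + 1, hk2⟩ from rfl] at he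
      unfold pcol at he
      rw [if_pos (by rw [e1, e2])] at he
      convert he using 3
      exact congrArg i (Fin.ext (by simp only [Fin.val_mk]; omega))
  -- Step 2: number of blocks ≤ L1
  have block_bound : S.card ≤ L1 := by
    set e := S.orderIsoOfFin rfl with hedef
    refine h1 S.card (fun j => (e j : ℕ)) ⟨?_, ?_, ?_⟩
    · intro j j' hjj
      exact_mod_cast (e.lt_iff_lt.mpr hjj)
    · intro j
      have hj : (e j : ℕ) ∈ S := (e j).2
      obtain ⟨t, -, ht⟩ := Finset.mem_image.mp hj
      show (e j : ℕ) < M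
      rw [← ht]
      exact (Nat.div_lt_iff_lt_mul hN).mpr (hlt t)
    · intro j hj
      set m := (e ⟨j, Nat.lt_of_succ_lt hj⟩ : ℕ) with hm
      set m' := (e ⟨j + 1, hj⟩ : ℕ) with hm'
      have hmm' : m < m' := by
        exact_mod_cast e.lt_iff_lt.mpr (by simp [Fin.lt_def])
      have hmS : m ∈ S := (e _).2
      have hm'S : m' ∈ S := (e _).2
      set F := Finset.univ.filter fun t => b t = m with hFdef
      have hFne : F.Nonempty := by
        obtain ⟨t, -, ht⟩ := Finset.mem_image.mp hmS
        exact ⟨t, by simp [hFdef, ht]⟩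
      set t0 := F.max' hFne with ht0
      have ht0m : b t0 = m := by
        have := F.max'_mem hFne; simp [hFdef] at this; exact this
      obtain ⟨s, -, hs⟩ := Finset.mem_image.mp hm'S
      have hts : t0 < s := by
        by_contra hcon
        push_neg at hcon
        have := hb hcon
        omega
      have hk2 : t0.val + 1 < k := lt_of_le_of_lt (by omega : t0.val + 1 ≤ s.val) s.isLt
      set t1 : Fin k := ⟨t0.val + 1, hk2⟩ with ht1
      have ht1m : b t1 ≠ m := by
        intro hcon
        have : t1 ≤ t0 := F.le_max' t1 (by simp [hFdef, hcon])
        simp only [Fin.le_def, ht1] at this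
        omega
      have hle1 : m < b t1 := by
        have : b t0 ≤ b t1 := hb (by simp only [Fin.le_def, ht1]; omega)
        omega
      have hle2 : b t1 ≤ m' := by
        rw [← hs]; exact hb (by simp only [Fin.le_def, ht1]; omega)
      have hbt1S : b t1 ∈ S := Finset.mem_image_of_mem b (Finset.mem_univ t1)
      have hbt1 : b t1 = m' := by
        obtain ⟨j'', hj''⟩ := e.surjective ⟨b t1, hbt1S⟩
        have hjj'' : (⟨j, Nat.lt_of_succ_lt hj⟩ : Fin S.card) < j'' := by
          rw [← e.lt_iff_lt, hj'']
          exact_mod_cast hle1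
        have : (⟨j + 1, hj⟩ : Fin S.card) ≤ j'' := by
          simp only [Fin.le_def]
          simp only [Fin.lt_def] at hjj''
          omega
        have := e.le_iff_le.mpr this
        rw [hj''] at this
        have : m' ≤ b t1 := by exact_mod_cast this
        omega
      have he := hedge t0.val (by exact hk2)
      unfold pcol at he
      rw [if_neg (by
        show ¬ (i ⟨t0.val, _⟩ / N = i ⟨t0.val + 1, _⟩ / N)
        have e0 : i ⟨t0.val, Nat.lt_of_succ_lt hk2⟩ = i t0 := congrArg i (Fin.ext rfl)
        rw [e0]
        show ¬ (b t0 = b t1)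
        omega)] at he
      have e0 : i ⟨t0.val, Nat.lt_of_succ_lt hk2⟩ = i t0 := congrArg i (Fin.ext rfl)
      rw [e0] at he
      show col1 m m' ≠ c
      rw [← ht0m, ← hbt1]
      exact he
  -- combine
  have hksum : k = ∑ m ∈ S, (Finset.univ.filter fun t => b t = m).card := by
    rw [← Finset.card_eq_sum_card_fiberwise (fun t _ => Finset.mem_image_of_mem b (Finset.mem_univ t))]
    simp
  calc k = ∑ m ∈ S, (Finset.univ.filter fun t => b t = m).card := hksum
    _ ≤ S.card * L2 := by
        have := Finset.sum_le_card_nsmul S _ L2 fiber_bound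
        simpa [smul_eq_mul] using this
    _ ≤ L1 * L2 := Nat.mul_le_mul_right _ block_bound

lemma recol_bound {col : ℕ → ℕ → Fin 3} {f : Fin 3 → Fin 3} {c c' : Fin 3}
    (hf : ∀ e, f e = c ↔ e = c') {V L : ℕ}
    (h : Bound col c' V L) : Bound (fun x y => f (col x y)) c V L := by
  intro k i hp
  obtain ⟨hm, hl, he⟩ := hp
  exact h k i ⟨hm, hl, fun t ht hc => (he t ht) ((hf _).mpr hc)⟩

lemma base_bound {N : ℕ} {col : Fin N → Fin N → Fin 3} {l : Fin 3 → ℕ}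
    (hl : ∀ c : Fin 3, IsGreatest {k : ℕ | ∃ i : Fin k → Fin N, StrictMono i ∧
        ∀ (t : ℕ) (h : t + 1 < k),
          col (i ⟨t, Nat.lt_of_succ_lt h⟩) (i ⟨t + 1, h⟩) ≠ c} (l c)) (c : Fin 3) :
    Bound (fun x y => if h : x < N ∧ y < N then col ⟨x, h.1⟩ ⟨y, h.2⟩ else 0) c N (l c) := by
  intro k i hp
  obtain ⟨hm, hb, he⟩ := hp
  refine (hl c).2 ⟨fun t => ⟨i t, hb t⟩, fun a b hab => ?_, fun t h => ?_⟩
  · exact Fin.mk_lt_mk.mpr (hm hab)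
  · have := he t h
    simp only [] at this
    rw [dif_pos (⟨hb _, hb _⟩ : i ⟨t, Nat.lt_of_succ_lt h⟩ < N ∧ i ⟨t+1, h⟩ < N)] at this
    exact this

theorem stmt_19
    (H : ∀ (N : ℕ) (col : Fin N → Fin N → Fin 3),
      ∃ a b : Fin 3, a ≠ b ∧ ∃ (k : ℕ) (i : Fin k → Fin N),
        (N : ℝ) ^ ((2 : ℝ) / 3) ≤ (k : ℝ) ∧ StrictMono i ∧
        ∀ (t : ℕ) (h : t + 1 < k),
          col (i ⟨t, Nat.lt_of_succ_lt h⟩) (i ⟨t + 1, h⟩) ∈ ({a, b} : Set (Fin 3))) :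
    ∀ (N : ℕ) (col : Fin N → Fin N → Fin 3) (l : Fin 3 → ℕ),
      (∀ c : Fin 3, IsGreatest {k : ℕ | ∃ i : Fin k → Fin N, StrictMono i ∧
        ∀ (t : ℕ) (h : t + 1 < k),
          col (i ⟨t, Nat.lt_of_succ_lt h⟩) (i ⟨t + 1, h⟩) ≠ c} (l c)) →
      N ^ 2 ≤ l 0 * l 1 * l 2 := by
  intro N col l hl
  set col0 : ℕ → ℕ → Fin 3 :=
    fun x y => if h : x < N ∧ y < N then col ⟨x, h.1⟩ ⟨y, h.2⟩ else 0 with hcol0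
  -- the six recolorings
  have B0 : ∀ c : Fin 3, Bound (fun x y => (![0,1,2] : Fin 3 → Fin 3) (col0 x y)) c N
      (l ((![0,1,2] : Fin 3 → Fin 3) c)) :=
    fun c => recol_bound ((by decide : ∀ c e : Fin 3, (![0,1,2] : Fin 3 → Fin 3) e = c ↔ e = (![0,1,2] : Fin 3 → Fin 3) c) c) (base_bound hl _)
  have B1 : ∀ c : Fin 3, Bound (fun x y => (![1,2,0] : Fin 3 → Fin 3) (col0 x y)) c N
      (l ((![2,0,1] : Fin 3 → Fin 3) c)) :=
    fun c => recol_bound ((by decide : ∀ c e : Fin 3, (![1,2,0] : Fin 3 → Fin 3) e = c ↔ e = (![2,0,1] : Fin 3 → Fin 3) c) c) (base_bound hl _)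
  have B2 : ∀ c : Fin 3, Bound (fun x y => (![2,0,1] : Fin 3 → Fin 3) (col0 x y)) c N
      (l ((![1,2,0] : Fin 3 → Fin 3) c)) :=
    fun c => recol_bound ((by decide : ∀ c e : Fin 3, (![2,0,1] : Fin 3 → Fin 3) e = c ↔ e = (![1,2,0] : Fin 3 → Fin 3) c) c) (base_bound hl _)
  have B3 : ∀ c : Fin 3, Bound (fun x y => (![1,0,2] : Fin 3 → Fin 3) (col0 x y)) c N
      (l ((![1,0,2] : Fin 3 → Fin 3) c)) :=
    fun c => recol_bound ((by decide : ∀ c e : Fin 3, (![1,0,2] : Fin 3 → Fin 3) e = c ↔ e = (![1,0,2] : Fin 3 → Fin 3) c) c) (base_bound hl _)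
  have B4 : ∀ c : Fin 3, Bound (fun x y => (![2,1,0] : Fin 3 → Fin 3) (col0 x y)) c N
      (l ((![2,1,0] : Fin 3 → Fin 3) c)) :=
    fun c => recol_bound ((by decide : ∀ c e : Fin 3, (![2,1,0] : Fin 3 → Fin 3) e = c ↔ e = (![2,1,0] : Fin 3 → Fin 3) c) c) (base_bound hl _)
  have B5 : ∀ c : Fin 3, Bound (fun x y => (![0,2,1] : Fin 3 → Fin 3) (col0 x y)) c N
      (l ((![0,2,1] : Fin 3 → Fin 3) c)) :=
    fun c => recol_bound ((by decide : ∀ c e : Fin 3, (![0,2,1] : Fin 3 → Fin 3) e = c ↔ e = (![0,2,1] : Fin 3 → Fin 3) c) c) (base_bound hl _)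
  have Bprod := fun c : Fin 3 =>
    pcol_bound (B0 c) (pcol_bound (B1 c) (pcol_bound (B2 c)
      (pcol_bound (B3 c) (pcol_bound (B4 c) (B5 c)))))
  -- the big coloring
  obtain ⟨a, b, hab, k, iF, hkreal, hmonoF, hedgeF⟩ :=
    H (N ^ 6) (fun x y => (fun x' y' => if x' / (N*(N*(N*(N*N)))) = y' / (N*(N*(N*(N*N)))) then
        (fun x'' y'' => if x'' / (N*(N*(N*N))) = y'' / (N*(N*(N*N))) then
          (fun x3 y3 => if x3 / (N*(N*N)) = y3 / (N*(N*N)) then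
            (fun x4 y4 => if x4 / (N*N) = y4 / (N*N) then
              (fun x5 y5 => if x5 / N = y5 / N then
                (fun u v => (![0,2,1] : Fin 3 → Fin 3) (col0 u v)) (x5 % N) (y5 % N)
                else (fun u v => (![2,1,0] : Fin 3 → Fin 3) (col0 u v)) (x5 / N) (y5 / N))
              (x4 % (N*N)) (y4 % (N*N))
              else (fun u v => (![1,0,2] : Fin 3 → Fin 3) (col0 u v)) (x4 / (N*N)) (y4 / (N*N)))
            (x3 % (N*(N*N))) (y3 % (N*(N*N)))
            else (fun u v => (![2,0,1] : Fin 3 → Fin 3) (col0 u v)) (x3 / (N*(N*N))) (y3 / (N*(N*N))))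
          (x'' % (N*(N*(N*N)))) (y'' % (N*(N*(N*N))))
          else (fun u v => (![1,2,0] : Fin 3 → Fin 3) (col0 u v)) (x'' / (N*(N*(N*N)))) (y'' / (N*(N*(N*N)))))
        (x' % (N*(N*(N*(N*N))))) (y' % (N*(N*(N*(N*N)))))
        else (fun u v => (![0,1,2] : Fin 3 → Fin 3) (col0 u v)) (x' / (N*(N*(N*(N*N))))) (y' / (N*(N*(N*(N*N))))))
      x.val y.val)
  obtain ⟨c', hca, hcb⟩ := (by decide : ∀ a b : Fin 3, a ≠ b → ∃ c', c' ≠ a ∧ c' ≠ b) a b hab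
  have hV : N ^ 6 = N * (N*(N*(N*(N*N)))) := by ring
  have hkle : k ≤ l ((![0,1,2] : Fin 3 → Fin 3) c') * (l ((![2,0,1] : Fin 3 → Fin 3) c') *
      (l ((![1,2,0] : Fin 3 → Fin 3) c') * (l ((![1,0,2] : Fin 3 → Fin 3) c') *
      (l ((![2,1,0] : Fin 3 → Fin 3) c') * l ((![0,2,1] : Fin 3 → Fin 3) c'))))) := by
    apply Bprod c' k (fun t => (iF t).val)
    refine ⟨fun s t hst => hmonoF hst, fun t => ?_, fun t ht => ?_⟩
    · show (iF t).val < _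
      rw [← hV]
      exact (iF t).isLt
    · intro hcc
      have hmem := hedgeF t ht
      simp only [Set.mem_insert_iff, Set.mem_singleton_iff] at hmem
      rcases hmem with h | h
      · exact hca (by rw [← hcc]; exact h)
      · exact hcb (by rw [← hcc]; exact h)
  have hprodeq : l ((![0,1,2] : Fin 3 → Fin 3) c') * (l ((![2,0,1] : Fin 3 → Fin 3) c') *
      (l ((![1,2,0] : Fin 3 → Fin 3) c') * (l ((![1,0,2] : Fin 3 → Fin 3) c') *
      (l ((![2,1,0] : Fin 3 → Fin 3) c') * l ((![0,2,1] : Fin 3 → Fin 3) c'))))) =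
      (l 0 * l 1 * l 2) ^ 2 := by
    fin_cases c'
    · show l 0 * (l 2 * (l 1 * (l 1 * (l 2 * l 0)))) = (l 0 * l 1 * l 2) ^ 2; ring
    · show l 1 * (l 0 * (l 2 * (l 0 * (l 1 * l 2)))) = (l 0 * l 1 * l 2) ^ 2; ring
    · show l 2 * (l 1 * (l 0 * (l 2 * (l 0 * l 1)))) = (l 0 * l 1 * l 2) ^ 2; ring
  rw [hprodeq] at hkle
  have hpow : ((N ^ 6 : ℕ) : ℝ) ^ ((2:ℝ)/3) = ((N ^ 4 : ℕ) : ℝ) := by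
    push_cast
    rw [← Real.rpow_natCast (N:ℝ) 6, ← Real.rpow_mul (Nat.cast_nonneg N),
      ← Real.rpow_natCast (N:ℝ) 4]
    norm_num
  have h4 : (N ^ 4 : ℕ) ≤ (l 0 * l 1 * l 2) ^ 2 := by
    have hr : ((N ^ 4 : ℕ) : ℝ) ≤ (((l 0 * l 1 * l 2) ^ 2 : ℕ) : ℝ) := by
      rw [← hpow]
      exact le_trans hkreal (by exact_mod_cast Nat.cast_le.mpr hkle)
    exact_mod_cast hr
  by_contra hcon
  push_neg at hcon
  have h5 : (l 0 * l 1 * l 2) ^ 2 < (N ^ 2) ^ 2 := Nat.pow_lt_pow_left hcon (by norm_num)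
  have h6 : (N : ℕ) ^ 4 = (N ^ 2) ^ 2 := by ring
  omega
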